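/- Given countably many dense subsets (E_n) of 2^{<ℕ} and a function f : 2^{<ℕ} → 2^{<ℕ} assigning to each string an extension meeting a prescribed dense set, the following interleaved construction terminates at each stage and produces two reals x, y ∈ 2^ℕ: alternately extend the approximation to x to meet E_{n+1} (padding with 0s to a prescribed length k_{m'}), while extending the approximation to y by copying prescribed blocks g₁(k_m)⌢...⌢g₁(k_{m'-1}), then swap roles. The resulting x and y each meet every E_n. -/
import Mathlib


/-- The initial segment `x↾n` of a real `x ∈ 2^ℕ`, as a binary string. -/
def restrictSeq (x : ℕ → Bool) (n : ℕ) : List Bool := List.ofFn (fun i : Fin n => x i)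

/-- A set of strings is dense if every string has an extension in it. -/
def DenseStr (D : Set (List Bool)) : Prop := ∀ σ : List Bool, ∃ τ, σ <+: τ ∧ τ ∈ D

/-- A real meets a set of strings if some initial segment of it lies in the set. -/
def MeetsReal (x : ℕ → Bool) (A : Set (List Bool)) : Prop := ∃ n, restrictSeq x n ∈ A

/-- A real avoids a set of strings if no extension of some initial segment lies in the set. -/
def AvoidsReal (x : ℕ → Bool) (A : Set (List Bool)) : Prop :=
  ∃ n, ∀ τ, restrictSeq x n <+: τ → τ ∉ A

/-- A set of pairs of strings is dense if every pair has a coordinatewise extension in it. -/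
def DensePair (D : Set (List Bool × List Bool)) : Prop :=
  ∀ σ τ : List Bool, ∃ σ' τ', σ <+: σ' ∧ τ <+: τ' ∧ (σ', τ') ∈ D

/-- A pair of strings meets a set of pairs of strings if a pair of initial segments lies in it. -/
def MeetsPairStr (α β : List Bool) (D : Set (List Bool × List Bool)) : Prop :=
  ∃ α' β', α' <+: α ∧ β' <+: β ∧ (α', β') ∈ D

/-- A pair of reals meets a set of pairs of strings if a pair of initial segments lies in it. -/
def MeetsPairReal (x y : ℕ → Bool) (D : Set (List Bool × List Bool)) : Prop :=
  ∃ a b, (restrictSeq x a, restrictSeq y b) ∈ D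

/-- `x` agrees with the string `s` on the interval `[k, k + |s|)`. -/
def AgreesOn (x : ℕ → Bool) (k : ℕ) (s : List Bool) : Prop :=
  ∀ i, (h : i < s.length) → x (k + i) = s[i]



namespace Stmt13

variable (g₁ : ℕ → List Bool) (k : ℕ → ℕ)

/-- Concatenation of blocks `g₁ (k m) ++ g₁ (k (m+1)) ++ ... ` (j blocks). -/
def blk : ℕ → ℕ → List Bool
  | _, 0 => []
  | m, j+1 => g₁ (k m) ++ blk (m+1) j

variable (f : List Bool → ℕ → List Bool)

/-- One-sided step: extend σ via f to meet E n, pad with zeros to length k m';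
    τ copies the blocks. -/
def Fstep (n : ℕ) (σ τ : List Bool) (m : ℕ) : List Bool × List Bool × ℕ :=
  ((f σ n) ++ List.replicate (k (max (m+1) (f σ n).length) - (f σ n).length) false,
   τ ++ blk g₁ k m (max (m+1) (f σ n).length - m),
   max (m+1) (f σ n).length)

/-- The stage-by-stage construction; state is (σ, τ, m) with |σ| = |τ| = k m. -/
def Sseq : ℕ → List Bool × List Bool × ℕ
  | 0 => ([], [], 0)
  | s+1 =>
    let p := Sseq s
    if Even s then Fstep g₁ k f (s/2) p.1 p.2.1 p.2.2
    else
      let q := Fstep g₁ k f (s/2) p.2.1 p.1 p.2.2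
      (q.2.1, q.1, q.2.2)

section lemmas

variable (hg₁ : ∀ n, g₁ n ≠ [])
  (hk0 : k 0 = 0) (hks : ∀ n, k (n + 1) = k n + (g₁ (k n)).length)
  (hf : ∀ σ n, σ <+: f σ n)

include hks hg₁ in
lemma k_lt (n : ℕ) : k n < k (n+1) := by
  have := List.length_pos_iff.2 (hg₁ (k n))
  have := hks n
  omega

include hks hg₁ in
lemma k_mono : StrictMono k := strictMono_nat_of_lt_succ (k_lt g₁ k hg₁ hks)

include hks hg₁ hk0 in
lemma le_k (n : ℕ) : n ≤ k n := by
  induction n with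
  | zero => omega
  | succ n ih => have := k_lt g₁ k hg₁ hks n; omega

include hks in
lemma blk_length : ∀ j m, k m + (blk g₁ k m j).length = k (m + j) := by
  intro j
  induction j with
  | zero => intro m; simp [blk]
  | succ j ih =>
    intro m
    have h1 := ih (m+1)
    have h2 := hks m
    simp only [blk, List.length_append]
    have h3 : m + 1 + j = m + (j+1) := by omega
    rw [h3] at h1
    omega

include hks in
lemma blk_sub : ∀ j m i, i < j →
    ∃ u v, blk g₁ k m j = u ++ g₁ (k (m+i)) ++ v ∧ k m + u.length = k (m+i) := by
  intro j
  induction j with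
  | zero => omega
  | succ j ih =>
    intro m i hi
    match i with
    | 0 => exact ⟨[], blk g₁ k (m+1) j, by simp [blk], by simp⟩
    | i+1 =>
      obtain ⟨u, v, h1, h2⟩ := ih (m+1) i (by omega)
      refine ⟨g₁ (k m) ++ u, v, ?_, ?_⟩
      · simp only [blk, h1]
        have : m + 1 + i = m + (i+1) := by omega
        rw [this] at *
        simp
      · have := hks m
        have : m + 1 + i = m + (i+1) := by omega
        rw [this] at h2
        simp only [List.length_append]
        omega

include hg₁ hk0 hks in
lemma Fstep_spec (n : ℕ) (σ τ : List Bool) (m : ℕ) (hσ : σ.length = k m) (hτ : τ.length = k m) :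
    (Fstep g₁ k f n σ τ m).1.length = k (Fstep g₁ k f n σ τ m).2.2 ∧
    (Fstep g₁ k f n σ τ m).2.1.length = k (Fstep g₁ k f n σ τ m).2.2 ∧
    m < (Fstep g₁ k f n σ τ m).2.2 ∧
    f σ n <+: (Fstep g₁ k f n σ τ m).1 ∧
    τ <+: (Fstep g₁ k f n σ τ m).2.1 ∧
    ∀ i, m ≤ i → i < (Fstep g₁ k f n σ τ m).2.2 →
      ∃ u v, (Fstep g₁ k f n σ τ m).2.1 = u ++ g₁ (k i) ++ v ∧ u.length = k i := by
  set m' := max (m+1) (f σ n).length with hm'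
  have hmm' : m + 1 ≤ m' := le_max_left _ _
  have hflen : (f σ n).length ≤ k m' :=
    le_trans (le_max_right _ _) (le_k g₁ k hg₁ hk0 hks m')
  refine ⟨?_, ?_, ?_, ⟨_, rfl⟩, ⟨_, rfl⟩, ?_⟩
  · simp only [Fstep, List.length_append, List.length_replicate, ← hm']
    omega
  · simp only [Fstep, List.length_append, ← hm']
    have hb := blk_length g₁ k hks (m' - m) m
    have : m + (m' - m) = m' := by omega
    rw [this] at hb
    omega
  · simpa only [Fstep, ← hm'] using (by omega : m < m')
  · simp only [Fstep, ← hm']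
    intro i h1 h2
    obtain ⟨u, v, hb, hl⟩ := blk_sub g₁ k hks (m' - m) m (i - m) (by omega)
    have heq : m + (i - m) = i := by omega
    rw [heq] at hb hl
    exact ⟨τ ++ u, v, by rw [hb]; simp, by simp only [List.length_append]; omega⟩

include hg₁ hk0 hks in
lemma S_len (s : ℕ) :
    (Sseq g₁ k f s).1.length = k (Sseq g₁ k f s).2.2 ∧
    (Sseq g₁ k f s).2.1.length = k (Sseq g₁ k f s).2.2 := by
  induction s with
  | zero => simp [Sseq, hk0]
  | succ s ih =>
    simp only [Sseq]
    split
    · have := Fstep_spec g₁ k f hg₁ hk0 hks (s/2) _ _ _ ih.1 ih.2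
      exact ⟨this.1, this.2.1⟩
    · have := Fstep_spec g₁ k f hg₁ hk0 hks (s/2) _ _ _ ih.2 ih.1
      exact ⟨this.2.1, this.1⟩

include hg₁ hk0 hks in
lemma S_m_lt (s : ℕ) : (Sseq g₁ k f s).2.2 < (Sseq g₁ k f (s+1)).2.2 := by
  have ih := S_len g₁ k f hg₁ hk0 hks s
  simp only [Sseq]
  split
  · exact (Fstep_spec g₁ k f hg₁ hk0 hks (s/2) _ _ _ ih.1 ih.2).2.2.1
  · exact (Fstep_spec g₁ k f hg₁ hk0 hks (s/2) _ _ _ ih.2 ih.1).2.2.1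

include hg₁ hk0 hks hf in
lemma S_prefix (s : ℕ) :
    (Sseq g₁ k f s).1 <+: (Sseq g₁ k f (s+1)).1 ∧
    (Sseq g₁ k f s).2.1 <+: (Sseq g₁ k f (s+1)).2.1 := by
  have ih := S_len g₁ k f hg₁ hk0 hks s
  simp only [Sseq]
  split
  · have h := Fstep_spec g₁ k f hg₁ hk0 hks (s/2) _ _ _ ih.1 ih.2
    exact ⟨(hf _ _).trans h.2.2.2.1, h.2.2.2.2.1⟩
  · have h := Fstep_spec g₁ k f hg₁ hk0 hks (s/2) _ _ _ ih.2 ih.1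
    exact ⟨h.2.2.2.2.1, (hf _ _).trans h.2.2.2.1⟩

include hg₁ hk0 hks hf in
lemma S_prefix_le {s t : ℕ} (h : s ≤ t) :
    (Sseq g₁ k f s).1 <+: (Sseq g₁ k f t).1 ∧
    (Sseq g₁ k f s).2.1 <+: (Sseq g₁ k f t).2.1 := by
  induction t, h using Nat.le_induction with
  | base => exact ⟨List.prefix_refl _, List.prefix_refl _⟩
  | succ t ht ih =>
    have h2 := S_prefix g₁ k f hg₁ hk0 hks hf t
    exact ⟨ih.1.trans h2.1, ih.2.trans h2.2⟩

include hg₁ hk0 hks in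
lemma le_S_m (s : ℕ) : s ≤ (Sseq g₁ k f s).2.2 := by
  induction s with
  | zero => omega
  | succ s ih => have := S_m_lt g₁ k f hg₁ hk0 hks s; omega

include hg₁ hk0 hks in
lemma S_meets_x (n : ℕ) : f (Sseq g₁ k f (2*n)).1 n <+: (Sseq g₁ k f (2*n+1)).1 := by
  have ih := S_len g₁ k f hg₁ hk0 hks (2*n)
  simp only [Sseq]
  rw [if_pos (even_two_mul n), (by omega : (2*n)/2 = n)]
  have h := Fstep_spec g₁ k f hg₁ hk0 hks n _ _ _ ih.1 ih.2
  exact h.2.2.2.1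

include hg₁ hk0 hks in
lemma S_meets_y (n : ℕ) : f (Sseq g₁ k f (2*n+1)).2.1 n <+: (Sseq g₁ k f (2*n+2)).2.1 := by
  have ih := S_len g₁ k f hg₁ hk0 hks (2*n+1)
  simp only [Sseq]
  rw [if_neg (by simp [Nat.even_add_one] : ¬ Even (2*n+1)), (by omega : (2*n+1)/2 = n)]
  have h := Fstep_spec g₁ k f hg₁ hk0 hks n _ _ _ ih.2 ih.1
  exact h.2.2.2.1

include hg₁ hk0 hks in
lemma S_agree (s i : ℕ) (h1 : (Sseq g₁ k f s).2.2 ≤ i) (h2 : i < (Sseq g₁ k f (s+1)).2.2) :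
    (Even s ∧ ∃ u v, (Sseq g₁ k f (s+1)).2.1 = u ++ g₁ (k i) ++ v ∧ u.length = k i) ∨
    (¬ Even s ∧ ∃ u v, (Sseq g₁ k f (s+1)).1 = u ++ g₁ (k i) ++ v ∧ u.length = k i) := by
  have ih := S_len g₁ k f hg₁ hk0 hks s
  simp only [Sseq] at h2 ⊢
  by_cases hev : Even s
  · rw [if_pos hev] at h2 ⊢
    have h := Fstep_spec g₁ k f hg₁ hk0 hks (s/2) _ _ _ ih.1 ih.2
    exact Or.inl ⟨hev, h.2.2.2.2.2 i h1 h2⟩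
  · rw [if_neg hev] at h2 ⊢
    have h := Fstep_spec g₁ k f hg₁ hk0 hks (s/2) _ _ _ ih.2 ih.1
    exact Or.inr ⟨hev, h.2.2.2.2.2 i h1 h2⟩

end lemmas

/-- Evaluation of the limit real of a prefix-chain of strings. -/
lemma chain_eval (L : ℕ → List Bool) (hc : ∀ s t, s ≤ t → L s <+: L t)
    (hl : ∀ s, s ≤ (L s).length) (s i : ℕ) (h : i < (L s).length) :
    (L (i+1)).getD i false = (L s)[i] := by
  have h1 : i < (L (i+1)).length := lt_of_lt_of_le (Nat.lt_succ_self i) (hl (i+1))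
  rw [List.getD_eq_getElem _ _ h1]
  rcases le_total s (i+1) with hle | hle
  · exact ((hc s (i+1) hle).getElem h).symm
  · exact (hc (i+1) s hle).getElem h1

lemma chain_restrict (L : ℕ → List Bool) (hc : ∀ s t, s ≤ t → L s <+: L t)
    (hl : ∀ s, s ≤ (L s).length) (a : List Bool) (s : ℕ) (ha : a <+: L s) :
    restrictSeq (fun i => (L (i+1)).getD i false) a.length = a := by
  apply List.ext_getElem
  · simp [restrictSeq]
  · intro i h1 h2
    simp only [restrictSeq, List.getElem_ofFn]
    have hi : i < (L s).length := lt_of_lt_of_le h2 ha.length_le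
    rw [chain_eval L hc hl s i hi]
    exact (ha.getElem h2).symm

end Stmt13


/-- The interleaved construction: given dense sets `E_n` and an extension function `f` sending
each string to an extension lying in the prescribed dense set, there are reals `x, y` each
meeting every `E_n`, alternately copying the prescribed blocks `g₁(k_m)`. -/
theorem stmt_13 (E : ℕ → Set (List Bool)) (hE : ∀ n, DenseStr (E n))
    (f : List Bool → ℕ → List Bool)
    (hf : ∀ σ n, σ <+: f σ n ∧ f σ n ∈ E n)
    (g₁ : ℕ → List Bool) (hg₁ : ∀ n, g₁ n ≠ [])
    (k : ℕ → ℕ) (hk0 : k 0 = 0) (hks : ∀ n, k (n + 1) = k n + (g₁ (k n)).length) :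
    ∃ x y : ℕ → Bool,
      (∀ n, MeetsReal x (E n)) ∧ (∀ n, MeetsReal y (E n)) ∧
      ∀ m, AgreesOn x (k m) (g₁ (k m)) ∨ AgreesOn y (k m) (g₁ (k m)) := by
  have hf1 : ∀ σ n, σ <+: f σ n := fun σ n => (hf σ n).1
  have hc1 : ∀ s t, s ≤ t → (Stmt13.Sseq g₁ k f s).1 <+: (Stmt13.Sseq g₁ k f t).1 :=
    fun s t h => (Stmt13.S_prefix_le g₁ k f hg₁ hk0 hks hf1 h).1
  have hc2 : ∀ s t, s ≤ t → (Stmt13.Sseq g₁ k f s).2.1 <+: (Stmt13.Sseq g₁ k f t).2.1 :=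
    fun s t h => (Stmt13.S_prefix_le g₁ k f hg₁ hk0 hks hf1 h).2
  have hl1 : ∀ s, s ≤ (Stmt13.Sseq g₁ k f s).1.length := by
    intro s
    have h1 := (Stmt13.S_len g₁ k f hg₁ hk0 hks s).1
    have h2 := Stmt13.le_k g₁ k hg₁ hk0 hks (Stmt13.Sseq g₁ k f s).2.2
    have h3 := Stmt13.le_S_m g₁ k f hg₁ hk0 hks s
    omega
  have hl2 : ∀ s, s ≤ (Stmt13.Sseq g₁ k f s).2.1.length := by
    intro s
    have h1 := (Stmt13.S_len g₁ k f hg₁ hk0 hks s).2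
    have h2 := Stmt13.le_k g₁ k hg₁ hk0 hks (Stmt13.Sseq g₁ k f s).2.2
    have h3 := Stmt13.le_S_m g₁ k f hg₁ hk0 hks s
    omega
  refine ⟨fun i => ((Stmt13.Sseq g₁ k f (i+1)).1).getD i false,
          fun i => ((Stmt13.Sseq g₁ k f (i+1)).2.1).getD i false, ?_, ?_, ?_⟩
  · intro n
    refine ⟨(f (Stmt13.Sseq g₁ k f (2*n)).1 n).length, ?_⟩
    rw [Stmt13.chain_restrict (fun s => (Stmt13.Sseq g₁ k f s).1) hc1 hl1 _ (2*n+1)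
      (Stmt13.S_meets_x g₁ k f hg₁ hk0 hks n)]
    exact (hf _ n).2
  · intro n
    refine ⟨(f (Stmt13.Sseq g₁ k f (2*n+1)).2.1 n).length, ?_⟩
    rw [Stmt13.chain_restrict (fun s => (Stmt13.Sseq g₁ k f s).2.1) hc2 hl2 _ (2*n+2)
      (Stmt13.S_meets_y g₁ k f hg₁ hk0 hks n)]
    exact (hf _ n).2
  · intro m
    have hex : ∃ t, m < (Stmt13.Sseq g₁ k f t).2.2 :=
      ⟨m+1, lt_of_lt_of_le (Nat.lt_succ_self m) (Stmt13.le_S_m g₁ k f hg₁ hk0 hks (m+1))⟩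
    have hspec := Nat.find_spec hex
    have ht0 : Nat.find hex ≠ 0 := by
      intro h
      rw [h] at hspec
      simp [Stmt13.Sseq] at hspec
    obtain ⟨s, hs⟩ := Nat.exists_eq_succ_of_ne_zero ht0
    have hmin : ¬ m < (Stmt13.Sseq g₁ k f s).2.2 := Nat.find_min hex (by omega)
    rw [hs] at hspec
    rcases Stmt13.S_agree g₁ k f hg₁ hk0 hks s m (by omega) hspec with
      ⟨_, u, v, hb, hu⟩ | ⟨_, u, v, hb, hu⟩
    · right
      intro i hi
      have hlt : k m + i < (Stmt13.Sseq g₁ k f (s+1)).2.1.length := by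
        rw [hb]
        simp only [List.length_append]
        omega
      show ((Stmt13.Sseq g₁ k f (k m + i + 1)).2.1).getD (k m + i) false = _
      rw [Stmt13.chain_eval (fun s => (Stmt13.Sseq g₁ k f s).2.1) hc2 hl2 (s+1) (k m + i) hlt]
      simp only [hb, List.append_assoc]
      rw [List.getElem_append_right (by omega : u.length ≤ k m + i)]
      have hidx : k m + i - u.length = i := by omega
      simp only [hidx]
      exact List.getElem_append_left hi
    · left
      intro i hi
      have hlt : k m + i < (Stmt13.Sseq g₁ k f (s+1)).1.length := by
        rw [hb]
        simp only [List.length_append]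
        omega
      show ((Stmt13.Sseq g₁ k f (k m + i + 1)).1).getD (k m + i) false = _
      rw [Stmt13.chain_eval (fun s => (Stmt13.Sseq g₁ k f s).1) hc1 hl1 (s+1) (k m + i) hlt]
      simp only [hb, List.append_assoc]
      rw [List.getElem_append_right (by omega : u.length ≤ k m + i)]
      have hidx : k m + i - u.length = i := by omega
      simp only [hidx]
      exact List.getElem_append_left hi
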